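/- arXiv:1106.5431 — 5 statements merged into one kernel-verified Lean document; each statement's English description precedes it below -/
import Mathlib

section
/- The group of automorphisms of the unital associative real algebra of quaternions ℍ is isomorphic to SO(3), acting trivially on the real part and by rotations on the imaginary part Im ℍ. -/
/-- The basis `i, j, k` of the imaginary quaternions. -/
noncomputable def quatImBasis : Fin 3 → Quaternion ℝ :=
  ![⟨0, 1, 0, 0⟩, ⟨0, 0, 1, 0⟩, ⟨0, 0, 0, 1⟩]

namespace QuatSO3
open Matrix

/-- quaternion from re and imaginary coordinate vector -/
noncomputable def mk (a : ℝ) (v : Fin 3 → ℝ) : Quaternion ℝ := ⟨a, v 0, v 1, v 2⟩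

@[simp] lemma mk_re (a v) : (mk a v).re = a := rfl
@[simp] lemma mk_imI (a v) : (mk a v).imI = v 0 := rfl
@[simp] lemma mk_imJ (a v) : (mk a v).imJ = v 1 := rfl
@[simp] lemma mk_imK (a v) : (mk a v).imK = v 2 := rfl

def dotv (x y : Fin 3 → ℝ) : ℝ := x 0 * y 0 + x 1 * y 1 + x 2 * y 2

def crossv (x y : Fin 3 → ℝ) : Fin 3 → ℝ :=
  ![x 1 * y 2 - x 2 * y 1, x 2 * y 0 - x 0 * y 2, x 0 * y 1 - x 1 * y 0]

lemma mul_mk (a b : ℝ) (v w : Fin 3 → ℝ) :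
    mk a v * mk b w = mk (a * b - dotv v w) (a • w + b • v + crossv v w) := by
  ext <;> simp only [Quaternion.re_mul, Quaternion.imI_mul, Quaternion.imJ_mul, Quaternion.imK_mul] <;> 
    simp [mk, dotv, crossv, Quaternion.re_mul, Quaternion.imI_mul, Quaternion.imJ_mul,
      Quaternion.imK_mul] <;> ring

/-- adjugate of orthogonal det-1 matrix is the transpose -/
lemma adjugate_eq_transpose {A : Matrix (Fin 3) (Fin 3) ℝ}
    (h : Aᵀ * A = 1) (hd : A.det = 1) : A.adjugate = Aᵀ := by
  have h2 := Matrix.mul_adjugate A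
  rw [hd, one_smul] at h2
  calc A.adjugate = 1 * A.adjugate := (one_mul _).symm
    _ = Aᵀ * (A * A.adjugate) := by rw [← h, Matrix.mul_assoc]
    _ = Aᵀ := by rw [h2, mul_one]

lemma crossv_mulVec (A : Matrix (Fin 3) (Fin 3) ℝ) (x y : Fin 3 → ℝ) :
    crossv (A.mulVec x) (A.mulVec y) = (A.adjugate)ᵀ.mulVec (crossv x y) := by
  funext i
  fin_cases i <;>
    simp [crossv, Matrix.mulVec, dotProduct, Fin.sum_univ_three,
      Matrix.adjugate_fin_three, Matrix.transpose_apply] <;> ring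

lemma crossv_mulVec_so3 {A : Matrix (Fin 3) (Fin 3) ℝ}
    (h : Aᵀ * A = 1) (hd : A.det = 1) (x y : Fin 3 → ℝ) :
    crossv (A.mulVec x) (A.mulVec y) = A.mulVec (crossv x y) := by
  rw [crossv_mulVec, adjugate_eq_transpose h hd, Matrix.transpose_transpose]

lemma dotv_mulVec {A : Matrix (Fin 3) (Fin 3) ℝ} (h : Aᵀ * A = 1) (x y : Fin 3 → ℝ) :
    dotv (A.mulVec x) (A.mulVec y) = dotv x y := by
  have h00 := congrFun (congrFun h 0) 0
  have h01 := congrFun (congrFun h 0) 1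
  have h02 := congrFun (congrFun h 0) 2
  have h11 := congrFun (congrFun h 1) 1
  have h12 := congrFun (congrFun h 1) 2
  have h22 := congrFun (congrFun h 2) 2
  simp [Matrix.mul_apply, Fin.sum_univ_three, Matrix.one_apply, Matrix.transpose_apply] at h00 h01 h02 h11 h12 h22
  simp [dotv, Matrix.mulVec, dotProduct, Fin.sum_univ_three]
  linear_combination (x 0 * y 0) * h00 + (x 1 * y 1) * h11 + (x 2 * y 2) * h22 +
    (x 0 * y 1 + x 1 * y 0) * h01 + (x 0 * y 2 + x 2 * y 0) * h02 +
    (x 1 * y 2 + x 2 * y 1) * h12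


lemma vec3_eta (v : Fin 3 → ℝ) : ![v 0, v 1, v 2] = v := by
  funext i; fin_cases i <;> rfl

lemma mk_eta (q : Quaternion ℝ) : mk q.re ![q.imI, q.imJ, q.imK] = q := by
  ext <;> rfl

noncomputable def qmap (A : Matrix (Fin 3) (Fin 3) ℝ) (q : Quaternion ℝ) : Quaternion ℝ :=
  mk q.re (A.mulVec ![q.imI, q.imJ, q.imK])

lemma qmap_mk (A : Matrix (Fin 3) (Fin 3) ℝ) (a : ℝ) (v : Fin 3 → ℝ) :
    qmap A (mk a v) = mk a (A.mulVec v) := by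
  simp only [qmap, mk_re, mk_imI, mk_imJ, mk_imK, vec3_eta]

lemma mk_add (a b : ℝ) (v w : Fin 3 → ℝ) : mk a v + mk b w = mk (a + b) (v + w) := by
  ext <;> simp only [Quaternion.re_add, Quaternion.imI_add, Quaternion.imJ_add, Quaternion.imK_add] <;> simp [mk]

lemma coe_mk (r : ℝ) : (r : Quaternion ℝ) = mk r 0 := by
  ext <;> simp [mk]

lemma qmap_mul {A : Matrix (Fin 3) (Fin 3) ℝ} (h : Aᵀ * A = 1) (hd : A.det = 1)
    (p q : Quaternion ℝ) : qmap A (p * q) = qmap A p * qmap A q := by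
  rw [← mk_eta p, ← mk_eta q, mul_mk, qmap_mk, qmap_mk, qmap_mk, mul_mk,
    dotv_mulVec h, crossv_mulVec_so3 h hd, Matrix.mulVec_add, Matrix.mulVec_add,
    Matrix.mulVec_smul, Matrix.mulVec_smul]

noncomputable def qAlgEquiv {A : Matrix (Fin 3) (Fin 3) ℝ} (h : Aᵀ * A = 1) (hd : A.det = 1) :
    Quaternion ℝ ≃ₐ[ℝ] Quaternion ℝ where
  toFun := qmap A
  invFun := qmap Aᵀ
  left_inv q := by
    rw [← mk_eta q, qmap_mk, qmap_mk, Matrix.mulVec_mulVec, h, Matrix.one_mulVec]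
  right_inv q := by
    have h' : A * Aᵀ = 1 := mul_eq_one_comm.mp h
    rw [← mk_eta q, qmap_mk, qmap_mk, Matrix.mulVec_mulVec, h', Matrix.one_mulVec]
  map_mul' := qmap_mul h hd
  map_add' p q := by
    show qmap A _ = qmap A _ + qmap A _
    rw [← mk_eta p, ← mk_eta q, mk_add, qmap_mk, qmap_mk, qmap_mk, Matrix.mulVec_add, mk_add]
  commutes' r := by
    show qmap A _ = _
    have : (algebraMap ℝ (Quaternion ℝ)) r = (r : Quaternion ℝ) := rfl
    rw [this, coe_mk, qmap_mk, Matrix.mulVec_zero]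

@[simp] lemma qAlgEquiv_apply {A : Matrix (Fin 3) (Fin 3) ℝ} (h : Aᵀ * A = 1) (hd : A.det = 1)
    (q : Quaternion ℝ) : qAlgEquiv h hd q = qmap A q := rfl


lemma phi_coe (φ : Quaternion ℝ ≃ₐ[ℝ] Quaternion ℝ) (r : ℝ) :
    φ (r : Quaternion ℝ) = (r : Quaternion ℝ) := φ.commutes r

lemma re_map_eq_zero (φ : Quaternion ℝ ≃ₐ[ℝ] Quaternion ℝ) (q : Quaternion ℝ)
    (hq : q.re = 0) : (φ q).re = 0 := by
  have hsq : q * q = mk (-(q.imI ^ 2 + q.imJ ^ 2 + q.imK ^ 2)) 0 := by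
    ext <;> simp [mk, Quaternion.re_mul, Quaternion.imI_mul, Quaternion.imJ_mul,
      Quaternion.imK_mul, hq] <;> ring
  have h2 : φ q * φ q = mk (-(q.imI ^ 2 + q.imJ ^ 2 + q.imK ^ 2)) 0 := by
    rw [← _root_.map_mul, hsq, ← coe_mk, phi_coe, coe_mk]
  set p := φ q with hp
  have e0 := congrArg QuaternionAlgebra.re h2
  have e1 := congrArg QuaternionAlgebra.imI h2
  have e2 := congrArg QuaternionAlgebra.imJ h2
  have e3 := congrArg QuaternionAlgebra.imK h2
  simp only [Quaternion.re_mul, Quaternion.imI_mul, Quaternion.imJ_mul, Quaternion.imK_mul,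
    mk_re, mk_imI, mk_imJ, mk_imK, Pi.zero_apply] at e0 e1 e2 e3
  have f1 : p.re * p.imI = 0 := by linarith
  have f2 : p.re * p.imJ = 0 := by linarith
  have f3 : p.re * p.imK = 0 := by linarith
  have key : p.re ^ 2 * p.re ^ 2 + (q.imI ^ 2 + q.imJ ^ 2 + q.imK ^ 2) * p.re ^ 2 = 0 := by
    linear_combination p.re ^ 2 * e0 + (p.re * p.imI) * f1 + (p.re * p.imJ) * f2 +
      (p.re * p.imK) * f3
  have hge : (0:ℝ) ≤ p.re ^ 2 * p.re ^ 2 := by positivity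
  have hc : (0:ℝ) ≤ (q.imI ^ 2 + q.imJ ^ 2 + q.imK ^ 2) * p.re ^ 2 := by positivity
  have h4 : p.re ^ 2 * p.re ^ 2 = 0 := le_antisymm (by linarith) hge
  have h5 : p.re ^ 2 = 0 := mul_self_eq_zero.mp h4
  exact sq_eq_zero_iff.mp h5

/-- imaginary coordinates of a quaternion -/
noncomputable def imc (q : Quaternion ℝ) : Fin 3 → ℝ := ![q.imI, q.imJ, q.imK]

@[simp] lemma imc_mk (a : ℝ) (v : Fin 3 → ℝ) : imc (mk a v) = v := by
  funext i; fin_cases i <;> rfl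

noncomputable def matOf (φ : Quaternion ℝ ≃ₐ[ℝ] Quaternion ℝ) : Matrix (Fin 3) (Fin 3) ℝ :=
  Matrix.of fun i j => imc (φ (quatImBasis j)) i

lemma quatImBasis_re (j : Fin 3) : (quatImBasis j).re = 0 := by fin_cases j <;> rfl

lemma phi_basis (φ : Quaternion ℝ ≃ₐ[ℝ] Quaternion ℝ) (j : Fin 3) :
    φ (quatImBasis j) = mk 0 (fun i => matOf φ i j) := by
  ext
  · rw [mk_re]; exact re_map_eq_zero φ _ (quatImBasis_re j)
  · rfl
  · rfl
  · rfl


lemma phi_prod (φ : Quaternion ℝ ≃ₐ[ℝ] Quaternion ℝ) (j k : Fin 3) :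
    φ (quatImBasis j * quatImBasis k) =
      mk (-dotv (fun i => matOf φ i j) (fun i => matOf φ i k))
        (crossv (fun i => matOf φ i j) (fun i => matOf φ i k)) := by
  rw [_root_.map_mul, phi_basis, phi_basis, mul_mk]
  ext <;> simp [mk]

lemma horth (φ : Quaternion ℝ ≃ₐ[ℝ] Quaternion ℝ) (j k : Fin 3) :
    dotv (fun i => matOf φ i j) (fun i => matOf φ i k) = if j = k then 1 else 0 := by
  have h1 := congrArg QuaternionAlgebra.re (phi_prod φ j k)
  by_cases hjk : j = k
  · subst hjk
    have hb : quatImBasis j * quatImBasis j = mk (-1) 0 := by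
      fin_cases j <;> (ext <;> simp only [Quaternion.re_mul, Quaternion.imI_mul, Quaternion.imJ_mul, Quaternion.imK_mul] <;> simp [mk, quatImBasis, Quaternion.re_mul,
        Quaternion.imI_mul, Quaternion.imJ_mul, Quaternion.imK_mul])
    rw [hb, ← coe_mk, phi_coe, coe_mk] at h1
    simp only [mk_re] at h1
    rw [if_pos rfl]
    linarith
  · have hre : (quatImBasis j * quatImBasis k).re = 0 := by
      fin_cases j <;> fin_cases k <;>
        first
          | (exact absurd rfl hjk)
          | (simp only [Quaternion.re_mul]; simp [quatImBasis, Quaternion.re_mul])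
    have h0 := re_map_eq_zero φ _ hre
    rw [h1, mk_re] at h0
    rw [if_neg hjk]
    linarith

lemma matOf_orth (φ : Quaternion ℝ ≃ₐ[ℝ] Quaternion ℝ) : (matOf φ)ᵀ * matOf φ = 1 := by
  ext j k
  have := horth φ j k
  simp only [dotv] at this
  simp [Matrix.mul_apply, Fin.sum_univ_three, Matrix.one_apply, Matrix.transpose_apply]
  linarith [this]

lemma matOf_det (φ : Quaternion ℝ ≃ₐ[ℝ] Quaternion ℝ) : (matOf φ).det = 1 := by
  have hcross : crossv (fun i => matOf φ i 0) (fun i => matOf φ i 1) = (fun i => matOf φ i 2) := by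
    have h01 := phi_prod φ 0 1
    have hb : quatImBasis 0 * quatImBasis 1 = quatImBasis 2 := by
      ext <;> simp only [Quaternion.re_mul, Quaternion.imI_mul, Quaternion.imJ_mul, Quaternion.imK_mul] <;> simp [quatImBasis, Quaternion.re_mul, Quaternion.imI_mul,
        Quaternion.imJ_mul, Quaternion.imK_mul]
    rw [hb, phi_basis] at h01
    funext i
    fin_cases i
    exacts [(congrArg QuaternionAlgebra.imI h01).symm, (congrArg QuaternionAlgebra.imJ h01).symm,
      (congrArg QuaternionAlgebra.imK h01).symm]
  have hdet : (matOf φ).det =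
      dotv (crossv (fun i => matOf φ i 0) (fun i => matOf φ i 1)) (fun i => matOf φ i 2) := by
    rw [Matrix.det_fin_three]
    simp [dotv, crossv]
    ring
  rw [hdet, hcross]
  have := horth φ 2 2
  simpa using this


lemma star_eq_transpose (A : Matrix (Fin 3) (Fin 3) ℝ) : star A = Aᵀ := by
  ext i j; simp [Matrix.star_apply]

lemma matOf_mem (φ : Quaternion ℝ ≃ₐ[ℝ] Quaternion ℝ) :
    matOf φ ∈ Matrix.specialOrthogonalGroup (Fin 3) ℝ := by
  rw [Matrix.mem_specialOrthogonalGroup_iff]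
  exact ⟨by rw [Matrix.mem_orthogonalGroup_iff']; exact matOf_orth φ,
    matOf_det φ⟩

lemma so3_orth (A : Matrix.specialOrthogonalGroup (Fin 3) ℝ) :
    (A : Matrix (Fin 3) (Fin 3) ℝ)ᵀ * (A : Matrix (Fin 3) (Fin 3) ℝ) = 1 := by
  have h := A.2
  rw [Matrix.mem_specialOrthogonalGroup_iff, Matrix.mem_orthogonalGroup_iff'] at h
  exact h.1

lemma so3_det (A : Matrix.specialOrthogonalGroup (Fin 3) ℝ) :
    (A : Matrix (Fin 3) (Fin 3) ℝ).det = 1 := by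
  have h := A.2
  rw [Matrix.mem_specialOrthogonalGroup_iff] at h
  exact h.2

lemma mk_decomp (a : ℝ) (v : Fin 3 → ℝ) :
    mk a v = (a : Quaternion ℝ) + v 0 • quatImBasis 0 + v 1 • quatImBasis 1 +
      v 2 • quatImBasis 2 := by
  ext <;> simp only [Quaternion.re_add, Quaternion.imI_add, Quaternion.imJ_add, Quaternion.imK_add, Quaternion.re_smul, Quaternion.imI_smul, Quaternion.imJ_smul, Quaternion.imK_smul] <;> simp [mk, quatImBasis]

lemma phi_eq_qmap (φ : Quaternion ℝ ≃ₐ[ℝ] Quaternion ℝ) (q : Quaternion ℝ) :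
    φ q = qmap (matOf φ) q := by
  conv_lhs => rw [← mk_eta q]
  rw [mk_decomp, map_add, map_add, map_add, _root_.map_smul, _root_.map_smul, _root_.map_smul, phi_coe,
    phi_basis, phi_basis, phi_basis]
  rw [qmap]
  ext <;> simp only [Quaternion.re_add, Quaternion.imI_add, Quaternion.imJ_add, Quaternion.imK_add, Quaternion.re_smul, Quaternion.imI_smul, Quaternion.imJ_smul, Quaternion.imK_smul] <;> simp [mk, Matrix.mulVec, dotProduct, Fin.sum_univ_three] <;> ring

lemma matOf_mul (φ ψ : Quaternion ℝ ≃ₐ[ℝ] Quaternion ℝ) :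
    matOf (φ * ψ) = matOf φ * matOf ψ := by
  ext i j
  have h1 : (φ * ψ) (quatImBasis j) = mk 0 ((matOf φ).mulVec (fun i => matOf ψ i j)) := by
    rw [AlgEquiv.mul_apply, phi_basis ψ j, phi_eq_qmap φ, qmap_mk]
  have h2 : matOf (φ * ψ) i j = ((matOf φ).mulVec (fun i => matOf ψ i j)) i := by
    show imc ((φ * ψ) (quatImBasis j)) i = _
    rw [h1, imc_mk]
  rw [h2]
  simp [Matrix.mul_apply, Matrix.mulVec, dotProduct, Fin.sum_univ_three]

noncomputable def E :
    (Quaternion ℝ ≃ₐ[ℝ] Quaternion ℝ) ≃* Matrix.specialOrthogonalGroup (Fin 3) ℝ where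
  toFun φ := ⟨matOf φ, matOf_mem φ⟩
  invFun A := qAlgEquiv (so3_orth A) (so3_det A)
  left_inv φ := AlgEquiv.ext fun q => (phi_eq_qmap φ q).symm
  right_inv A := by
    apply Subtype.ext
    ext i j
    show imc (qmap (A : Matrix (Fin 3) (Fin 3) ℝ) (quatImBasis j)) i
      = (A : Matrix (Fin 3) (Fin 3) ℝ) i j
    fin_cases j <;> fin_cases i <;>
      simp [imc, qmap, quatImBasis, mk, Matrix.mulVec, dotProduct, Fin.sum_univ_three]
  map_mul' φ ψ := Subtype.ext (matOf_mul φ ψ)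

@[simp] lemma E_coe (φ : Quaternion ℝ ≃ₐ[ℝ] Quaternion ℝ) :
    ((E φ : Matrix.specialOrthogonalGroup (Fin 3) ℝ) : Matrix (Fin 3) (Fin 3) ℝ) = matOf φ :=
  rfl

end QuatSO3

/-- The group of automorphisms of the unital associative real algebra `ℍ` is isomorphic to
`SO(3)`, acting trivially on the real part and by rotations on the imaginary part. -/
theorem auts_of_quaternions_iso_SO3 :
    ∃ e : (Quaternion ℝ ≃ₐ[ℝ] Quaternion ℝ) ≃* Matrix.specialOrthogonalGroup (Fin 3) ℝ,
      ∀ φ : Quaternion ℝ ≃ₐ[ℝ] Quaternion ℝ,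
        (∀ r : ℝ, φ (r : Quaternion ℝ) = (r : Quaternion ℝ)) ∧
        (∀ j : Fin 3, φ (quatImBasis j) =
          ∑ i : Fin 3, ((e φ : Matrix (Fin 3) (Fin 3) ℝ) i j) • quatImBasis i) := by
  refine ⟨QuatSO3.E, fun φ => ⟨QuatSO3.phi_coe φ, fun j => ?_⟩⟩
  rw [QuatSO3.E_coe, Fin.sum_univ_three, QuatSO3.phi_basis]
  ext <;> simp only [Quaternion.re_add, Quaternion.imI_add, Quaternion.imJ_add, Quaternion.imK_add, Quaternion.re_smul, Quaternion.imI_smul, Quaternion.imJ_smul, Quaternion.imK_smul] <;> simp [QuatSO3.mk, quatImBasis]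
end

section
/- Every automorphism of the algebra ℍ is inner: for any algebra automorphism φ of ℍ there exists a unit quaternion q (with |q| = 1) such that φ(x) = q x q⁻¹ for all x ∈ ℍ. -/
set_option maxHeartbeats 1000000 in

/-- Every automorphism of the algebra `ℍ` is inner: it is conjugation by a unit quaternion. -/
theorem quaternion_aut_is_inner (φ : Quaternion ℝ ≃ₐ[ℝ] Quaternion ℝ) :
    ∃ q : Quaternion ℝ, ‖q‖ = 1 ∧ ∀ x : Quaternion ℝ, φ x = q * x * q⁻¹ := by
  set I : Quaternion ℝ := ⟨0,1,0,0⟩ with hIdef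
  set J : Quaternion ℝ := ⟨0,0,1,0⟩ with hJdef
  have hII : I * I = -1 := by
    have : (⟨0,1,0,0⟩ : Quaternion ℝ) * (⟨0,1,0,0⟩ : Quaternion ℝ) = -1 := by ext <;> simp [Quaternion.re_mul, Quaternion.imI_mul,
      Quaternion.imJ_mul, Quaternion.imK_mul]
    exact this
  have hJJ : J * J = -1 := by
    have : (⟨0,0,1,0⟩ : Quaternion ℝ) * (⟨0,0,1,0⟩ : Quaternion ℝ) = -1 := by ext <;> simp [Quaternion.re_mul, Quaternion.imI_mul,
      Quaternion.imJ_mul, Quaternion.imK_mul]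
    exact this
  have hJI : J * I = -(I * J) := by
    have : (⟨0,0,1,0⟩ : Quaternion ℝ) * (⟨0,1,0,0⟩ : Quaternion ℝ) = -((⟨0,1,0,0⟩ : Quaternion ℝ) * (⟨0,0,1,0⟩ : Quaternion ℝ)) := by ext <;> simp [Quaternion.re_mul,
      Quaternion.imI_mul, Quaternion.imJ_mul, Quaternion.imK_mul]
    exact this
  have hI0 : I ≠ 0 := by
    rw [hIdef]; intro h; have := congrArg QuaternionAlgebra.imI h; simp [Quaternion.imI_zero] at this
  set u : Quaternion ℝ := φ I with hudef
  set v : Quaternion ℝ := φ J with hvdef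
  have hu2 : u * u = -1 := by rw [hudef, ← map_mul, hII, map_neg, map_one]
  have hv2 : v * v = -1 := by rw [hvdef, ← map_mul, hJJ, map_neg, map_one]
  have hvu : v * u = -(u * v) := by
    rw [hudef, hvdef, ← map_mul, ← map_mul, hJI, map_neg]
  -- step 1: find p ≠ 0 with p * I = u * p
  obtain ⟨p, hp0, hpI⟩ : ∃ p : Quaternion ℝ, p ≠ 0 ∧ p * I = u * p := by
    by_cases hp : (1 : Quaternion ℝ) - u * I = 0
    · have huI : u = -I := by
        have h1 : u * I = 1 := by
          have := sub_eq_zero.mp hp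
          exact this.symm
        have h2 := congrArg (· * I) h1
        simp only [mul_assoc, hII] at h2
        simp only [mul_neg, mul_one, one_mul] at h2
        exact (neg_eq_iff_eq_neg.mp h2)
      refine ⟨J, by rw [hJdef]; intro h; have := congrArg QuaternionAlgebra.imJ h; simp [Quaternion.imJ_zero] at this, ?_⟩
      rw [huI, hJI, neg_mul]
    · refine ⟨1 - u * I, hp, ?_⟩
      have e1 : (1 - u * I) * I = I - u * (I * I) := by noncomm_ring
      have e2 : u * (1 - u * I) = u - (u * u) * I := by noncomm_ring
      rw [e1, e2, hII, hu2]
      noncomm_ring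
  -- step 2: w = p⁻¹ v p, anticommutes with I, squares to -1
  obtain ⟨w, hpw⟩ : ∃ w : Quaternion ℝ, p * w = v * p :=
    ⟨p⁻¹ * (v * p), by rw [mul_inv_cancel_left₀ hp0]⟩
  have hw2 : w * w = -1 := by
    apply mul_left_cancel₀ hp0
    calc p * (w * w) = (p * w) * w := by rw [mul_assoc]
      _ = (v * p) * w := by rw [hpw]
      _ = v * (p * w) := by rw [mul_assoc]
      _ = v * (v * p) := by rw [hpw]
      _ = (v * v) * p := by rw [mul_assoc]
      _ = p * (-1) := by rw [hv2]; noncomm_ring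
  have hwI : w * I = -(I * w) := by
    apply mul_left_cancel₀ hp0
    calc p * (w * I) = (p * w) * I := by rw [mul_assoc]
      _ = v * (p * I) := by rw [hpw, mul_assoc]
      _ = (v * u) * p := by rw [hpI, mul_assoc]
      _ = -(u * (v * p)) := by rw [hvu]; noncomm_ring
      _ = -(u * (p * w)) := by rw [hpw]
      _ = -((u * p) * w) := by rw [mul_assoc]
      _ = -((p * I) * w) := by rw [hpI]
      _ = p * (-(I * w)) := by noncomm_ring
  have hIw : I * w = -(w * I) := by rw [hwI, neg_neg]
  -- step 3: find r ≠ 0, commuting with I, with r * J = w * r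
  obtain ⟨r, hr0, hrI, hrJ⟩ : ∃ r : Quaternion ℝ, r ≠ 0 ∧ r * I = I * r ∧ r * J = w * r := by
    by_cases hr : (1 : Quaternion ℝ) - w * J = 0
    · have hwJ : w = -J := by
        have h1 : w * J = 1 := (sub_eq_zero.mp hr).symm
        have h2 := congrArg (· * J) h1
        simp only [mul_assoc, hJJ] at h2
        simp only [mul_neg, mul_one, one_mul] at h2
        exact (neg_eq_iff_eq_neg.mp h2)
      refine ⟨I, hI0, rfl, ?_⟩
      rw [hwJ, neg_mul, hJI, neg_neg]
    · refine ⟨1 - w * J, hr, ?_, ?_⟩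
      · have e1 : (1 - w * J) * I = I - w * (J * I) := by noncomm_ring
        have e2 : I * (1 - w * J) = I - (I * w) * J := by noncomm_ring
        rw [e1, e2, hJI, hIw]
        noncomm_ring
      · have e1 : (1 - w * J) * J = J - w * (J * J) := by noncomm_ring
        have e2 : w * (1 - w * J) = w - (w * w) * J := by noncomm_ring
        rw [e1, e2, hJJ, hw2]
        noncomm_ring
  -- the conjugating element
  obtain ⟨q₀, hq0def⟩ : ∃ t : Quaternion ℝ, t = p * r := ⟨_, rfl⟩
  have hq00 : q₀ ≠ 0 := by rw [hq0def]; exact mul_ne_zero hp0 hr0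
  have hqI : q₀ * I = u * q₀ := by
    rw [hq0def]
    calc (p * r) * I = p * (r * I) := by rw [mul_assoc]
      _ = (p * I) * r := by rw [hrI, mul_assoc]
      _ = u * (p * r) := by rw [hpI, mul_assoc]
  have hqJ : q₀ * J = v * q₀ := by
    rw [hq0def]
    calc (p * r) * J = p * (r * J) := by rw [mul_assoc]
      _ = (p * w) * r := by rw [hrJ, mul_assoc]
      _ = v * (p * r) := by rw [hpw, mul_assoc]
  have hqK : q₀ * (I * J) = u * v * q₀ := by
    calc q₀ * (I * J) = (q₀ * I) * J := by rw [mul_assoc]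
      _ = u * (q₀ * J) := by rw [hqI, mul_assoc]
      _ = u * v * q₀ := by rw [hqJ, mul_assoc]
  have key : ∀ x : Quaternion ℝ, φ x * q₀ = q₀ * x := by
    intro x
    have hx : x = (x.re : Quaternion ℝ) + x.imI • I + x.imJ • J + x.imK • (I * J) := by
      have : ∀ a b : Quaternion ℝ, a = (⟨0,1,0,0⟩ : Quaternion ℝ) → b = (⟨0,0,1,0⟩ : Quaternion ℝ) →
          x = (x.re : Quaternion ℝ) + x.imI • a + x.imJ • b + x.imK • (a * b) := by
        intro a b ha hb
        have a1 : a.re = 0 := by rw [ha]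
        have a2 : a.imI = 1 := by rw [ha]
        have a3 : a.imJ = 0 := by rw [ha]
        have a4 : a.imK = 0 := by rw [ha]
        have b1 : b.re = 0 := by rw [hb]
        have b2 : b.imI = 0 := by rw [hb]
        have b3 : b.imJ = 1 := by rw [hb]
        have b4 : b.imK = 0 := by rw [hb]
        ext <;> simp [Quaternion.re_mul, Quaternion.imI_mul, Quaternion.imJ_mul,
          Quaternion.imK_mul, a1, a2, a3, a4, b1, b2, b3, b4]
      exact this I J hIdef hJdef
    have hφre : φ (x.re : Quaternion ℝ) = (x.re : Quaternion ℝ) := by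
      have := φ.commutes x.re
      rwa [Quaternion.algebraMap_def] at this
    conv_lhs => rw [hx]
    conv_rhs => rw [hx]
    rw [map_add, map_add, map_add, map_smul, map_smul, map_smul, map_mul, hφre, ← hudef, ← hvdef]
    simp only [add_mul, mul_add, smul_mul_assoc, mul_smul_comm]
    rw [hqI, hqJ, hqK, Quaternion.coe_commutes]
  have hnq : ‖q₀‖ ≠ 0 := norm_ne_zero_iff.mpr hq00
  have hcoe0 : ((‖q₀‖ : ℝ) : Quaternion ℝ) ≠ 0 := by
    rw [← Quaternion.coe_zero]
    exact fun h => hnq (Quaternion.coe_injective h)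
  refine ⟨‖q₀‖⁻¹ • q₀, ?_, ?_⟩
  · rw [norm_smul, norm_inv, norm_norm, inv_mul_cancel₀ hnq]
  · intro x
    rw [smul_inv₀, inv_inv, smul_mul_assoc, smul_mul_assoc, mul_smul_comm, smul_smul,
      inv_mul_cancel₀ hnq, one_smul]
    calc φ x = φ x * q₀ * q₀⁻¹ := by rw [mul_assoc, mul_inv_cancel₀ hq00, mul_one]
      _ = q₀ * x * q₀⁻¹ := by rw [key]
end

section
/- Let E be a finite-dimensional left ℍ-module and ι : U → E an injective ℝ-linear map from a real vector space U such that im ι + J(im ι) = E for every admissible linear complex structure J on E. Then 2·dim_ℝ U ≥ dim_ℝ E. -/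
/-- If `ι : U → E` is an injective real-linear map into a finite-dimensional left `ℍ`-module
with `im ι + J(im ι) = E` for every admissible linear complex structure `J` (multiplication by
a purely imaginary unit quaternion), then `2 dim U ≥ dim E`. -/
theorem CR_quaternionic_dim_bound
    {E U : Type*} [AddCommGroup E] [Module ℝ E] [Module (Quaternion ℝ) E]
    [IsScalarTower ℝ (Quaternion ℝ) E] [FiniteDimensional ℝ E]
    [AddCommGroup U] [Module ℝ U]
    (ι : U →ₗ[ℝ] E) (hinj : Function.Injective ι)
    (h : ∀ q : Quaternion ℝ, q.re = 0 → ‖q‖ = 1 →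
      ∀ e : E, ∃ u u' : U, e = ι u + q • ι u') :
    Module.finrank ℝ E ≤ 2 * Module.finrank ℝ U := by
  set q : Quaternion ℝ := ⟨0, 1, 0, 0⟩ with hq
  have hre : q.re = 0 := rfl
  have hnorm : ‖q‖ = 1 := by
    have h2 : ‖q‖ * ‖q‖ = 1 := by
      rw [← Quaternion.normSq_eq_norm_mul_self]
      rw [Quaternion.normSq_def']; norm_num [hq]
    nlinarith [norm_nonneg q]
  have hE := h q hre hnorm
  set S : Submodule ℝ E := LinearMap.range ι with hS
  set f : E →ₗ[ℝ] E :=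
    { toFun := fun e => q • e
      map_add' := fun a b => smul_add q a b
      map_smul' := fun r e => by
        simp only [RingHom.id_apply]
        rw [← algebraMap_smul (Quaternion ℝ) r e, ← mul_smul, ← Algebra.commutes r q,
          mul_smul, algebraMap_smul] } with hf
  have htop : S ⊔ S.map f = ⊤ := by
    rw [eq_top_iff]
    intro e _
    obtain ⟨u, u', he⟩ := hE e
    rw [he]
    exact Submodule.add_mem _ (Submodule.mem_sup_left ⟨u, rfl⟩)
      (Submodule.mem_sup_right (Submodule.mem_map_of_mem ⟨u', rfl⟩))
  have hSU : Module.finrank ℝ S = Module.finrank ℝ U :=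
    LinearMap.finrank_range_of_inj hinj
  calc Module.finrank ℝ E = Module.finrank ℝ (⊤ : Submodule ℝ E) :=
        (finrank_top ℝ E).symm
    _ = Module.finrank ℝ (S ⊔ S.map f : Submodule ℝ E) := by rw [htop]
    _ ≤ Module.finrank ℝ S + Module.finrank ℝ (S.map f) :=
        Submodule.finrank_add_le_finrank_add_finrank S (S.map f)
    _ ≤ Module.finrank ℝ S + Module.finrank ℝ S :=
        add_le_add_right (Submodule.finrank_map_le f S) _
    _ = 2 * Module.finrank ℝ U := by rw [hSU]; ring
end

section
/- The group of f-quaternionic linear automorphisms of Im ℍ (with its standard f-quaternionic structure) is CO(3), the group of conformal linear transformations of ℝ³ = Im ℍ (nonzero scalar multiples of orthogonal transformations with positive determinant factor, i.e. ℝ₊ × O(3) acting as similarities). -/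
open Quaternion

/-- The real part of a quaternion, as a real-linear map. -/
noncomputable def reLin : Quaternion ℝ →ₗ[ℝ] ℝ where
  toFun x := x.re
  map_add' _ _ := rfl
  map_smul' _ _ := rfl

/-- The imaginary quaternions, as a real subspace of `ℍ`. -/
noncomputable def imH : Submodule ℝ (Quaternion ℝ) := LinearMap.ker reLin

lemma mem_imH {x : Quaternion ℝ} : x ∈ imH ↔ x.re = 0 := Iff.rfl

lemma im_re0 (x : imH) : (x : Quaternion ℝ).re = 0 := x.2

lemma anticomm (a b : Quaternion ℝ) (ha : a.re = 0) (hb : b.re = 0)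
    (hab : (a*b).re = 0) : b * a = -(a*b) := by
  simp only [Quaternion.re_mul, ha, hb, zero_mul, mul_zero, zero_sub, sub_zero, zero_add] at hab
  ext <;>
    simp only [Quaternion.re_mul, Quaternion.imI_mul, Quaternion.imJ_mul, Quaternion.imK_mul,
      ha, hb, Quaternion.re_neg, Quaternion.imI_neg, Quaternion.imJ_neg, Quaternion.imK_neg,
      zero_mul, mul_zero, zero_add, add_zero, zero_sub, sub_zero, neg_sub] <;>
    linarith

lemma sq_im (a : Quaternion ℝ) (ha : a.re = 0) : a * a = ((-(‖a‖^2) : ℝ) : Quaternion ℝ) := by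
  have h : ‖a‖^2 = normSq a := by rw [pow_two, ← Quaternion.normSq_eq_norm_mul_self]
  have hs : star a = -a := Quaternion.star_eq_neg.2 ha
  have h2 := Quaternion.self_mul_star (a := a)
  rw [hs, mul_neg] at h2
  rw [h, Quaternion.coe_neg, ← h2, neg_neg]

def iQ : Quaternion ℝ := ⟨0,1,0,0⟩
def jQ : Quaternion ℝ := ⟨0,0,1,0⟩
def kQ : Quaternion ℝ := ⟨0,0,0,1⟩

lemma iQ_mul_jQ : iQ * jQ = kQ := by ext <;> simp only [Quaternion.re_mul, Quaternion.imI_mul, Quaternion.imJ_mul, Quaternion.imK_mul, Quaternion.re_neg, Quaternion.imI_neg, Quaternion.imJ_neg, Quaternion.imK_neg] <;> simp [iQ, jQ, kQ]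
lemma iQ_mul_kQ : iQ * kQ = -jQ := by ext <;> simp only [Quaternion.re_mul, Quaternion.imI_mul, Quaternion.imJ_mul, Quaternion.imK_mul, Quaternion.re_neg, Quaternion.imI_neg, Quaternion.imJ_neg, Quaternion.imK_neg] <;> simp [iQ, jQ, kQ]
lemma jQ_mul_iQ : jQ * iQ = -kQ := by ext <;> simp only [Quaternion.re_mul, Quaternion.imI_mul, Quaternion.imJ_mul, Quaternion.imK_mul, Quaternion.re_neg, Quaternion.imI_neg, Quaternion.imJ_neg, Quaternion.imK_neg] <;> simp [iQ, jQ, kQ]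
lemma jQ_mul_kQ : jQ * kQ = iQ := by ext <;> simp only [Quaternion.re_mul, Quaternion.imI_mul, Quaternion.imJ_mul, Quaternion.imK_mul, Quaternion.re_neg, Quaternion.imI_neg, Quaternion.imJ_neg, Quaternion.imK_neg] <;> simp [iQ, jQ, kQ]
lemma kQ_mul_iQ : kQ * iQ = jQ := by ext <;> simp only [Quaternion.re_mul, Quaternion.imI_mul, Quaternion.imJ_mul, Quaternion.imK_mul, Quaternion.re_neg, Quaternion.imI_neg, Quaternion.imJ_neg, Quaternion.imK_neg] <;> simp [iQ, jQ, kQ]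
lemma kQ_mul_jQ : kQ * jQ = -iQ := by ext <;> simp only [Quaternion.re_mul, Quaternion.imI_mul, Quaternion.imJ_mul, Quaternion.imK_mul, Quaternion.re_neg, Quaternion.imI_neg, Quaternion.imJ_neg, Quaternion.imK_neg] <;> simp [iQ, jQ, kQ]
lemma iQ_mul_iQ : iQ * iQ = -1 := by ext <;> simp only [Quaternion.re_mul, Quaternion.imI_mul, Quaternion.imJ_mul, Quaternion.imK_mul, Quaternion.re_neg, Quaternion.imI_neg, Quaternion.imJ_neg, Quaternion.imK_neg] <;> simp [iQ]
lemma jQ_mul_jQ : jQ * jQ = -1 := by ext <;> simp only [Quaternion.re_mul, Quaternion.imI_mul, Quaternion.imJ_mul, Quaternion.imK_mul, Quaternion.re_neg, Quaternion.imI_neg, Quaternion.imJ_neg, Quaternion.imK_neg] <;> simp [jQ]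
lemma kQ_mul_kQ : kQ * kQ = -1 := by ext <;> simp only [Quaternion.re_mul, Quaternion.imI_mul, Quaternion.imJ_mul, Quaternion.imK_mul, Quaternion.re_neg, Quaternion.imI_neg, Quaternion.imJ_neg, Quaternion.imK_neg] <;> simp [kQ]

lemma norm_iQ : ‖iQ‖ = 1 := by
  have h : normSq iQ = 1 := by rw [Quaternion.normSq_def']; simp [iQ]
  have h2 : ‖iQ‖ * ‖iQ‖ = 1 := by rw [← Quaternion.normSq_eq_norm_mul_self, h]
  nlinarith [norm_nonneg iQ]
lemma norm_jQ : ‖jQ‖ = 1 := by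
  have h : normSq jQ = 1 := by rw [Quaternion.normSq_def']; simp [jQ]
  have h2 : ‖jQ‖ * ‖jQ‖ = 1 := by rw [← Quaternion.normSq_eq_norm_mul_self, h]
  nlinarith [norm_nonneg jQ]
lemma norm_kQ : ‖kQ‖ = 1 := by
  have h : normSq kQ = 1 := by rw [Quaternion.normSq_def']; simp [kQ]
  have h2 : ‖kQ‖ * ‖kQ‖ = 1 := by rw [← Quaternion.normSq_eq_norm_mul_self, h]
  nlinarith [norm_nonneg kQ]

lemma inner_iQ_jQ : (inner ℝ iQ jQ : ℝ) = 0 := by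
  rw [Quaternion.inner_def]
  simp only [Quaternion.re_mul, Quaternion.re_star, Quaternion.imI_star, Quaternion.imJ_star, Quaternion.imK_star]
  simp [iQ, jQ]
lemma inner_jQ_kQ : (inner ℝ jQ kQ : ℝ) = 0 := by
  rw [Quaternion.inner_def]
  simp only [Quaternion.re_mul, Quaternion.re_star, Quaternion.imI_star, Quaternion.imJ_star, Quaternion.imK_star]
  simp [jQ, kQ]
lemma inner_iQ_kQ : (inner ℝ iQ kQ : ℝ) = 0 := by
  rw [Quaternion.inner_def]
  simp only [Quaternion.re_mul, Quaternion.re_star, Quaternion.imI_star, Quaternion.imJ_star, Quaternion.imK_star]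
  simp [iQ, kQ]

lemma iQ_mem : iQ ∈ imH := rfl
lemma jQ_mem : jQ ∈ imH := rfl
lemma kQ_mem : kQ ∈ imH := rfl

noncomputable def iH : imH := ⟨iQ, iQ_mem⟩
noncomputable def jH : imH := ⟨jQ, jQ_mem⟩
noncomputable def kH : imH := ⟨kQ, kQ_mem⟩

noncomputable def imProj : Quaternion ℝ →ₗ[ℝ] imH where
  toFun x := ⟨x - (x.re : Quaternion ℝ), by rw [mem_imH]; simp⟩
  map_add' x y := by
    apply Subtype.ext
    show x + y - _ = (x - _) + (y - _)
    ext <;> simp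
  map_smul' r x := by
    apply Subtype.ext
    show r • x - _ = r • (x - _)
    ext <;> simp [mul_comm]

lemma imProj_coe (x : Quaternion ℝ) : (imProj x : Quaternion ℝ) = x - (x.re : Quaternion ℝ) := rfl

lemma imProj_of_im {x : Quaternion ℝ} (h : x.re = 0) : (imProj x : Quaternion ℝ) = x := by
  rw [imProj_coe, h]; simp

lemma decompQ (x : Quaternion ℝ) :
    x = x.re • (1 : Quaternion ℝ) + x.imI • iQ + x.imJ • jQ + x.imK • kQ := by
  ext <;> simp only [Quaternion.re_add, Quaternion.imI_add, Quaternion.imJ_add, Quaternion.imK_add, Quaternion.re_smul, Quaternion.imI_smul, Quaternion.imJ_smul, Quaternion.imK_smul] <;> simp [iQ, jQ, kQ]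

lemma decompIm (a : imH) :
    a = (a : Quaternion ℝ).imI • iH + (a : Quaternion ℝ).imJ • jH + (a : Quaternion ℝ).imK • kH := by
  apply Subtype.ext
  push_cast
  have := im_re0 a
  ext <;> simp only [Quaternion.re_add, Quaternion.imI_add, Quaternion.imJ_add, Quaternion.imK_add, Quaternion.re_smul, Quaternion.imI_smul, Quaternion.imJ_smul, Quaternion.imK_smul] <;> simp [iH, jH, kH, iQ, jQ, kQ, this]

lemma linext (f g : Quaternion ℝ →ₗ[ℝ] Quaternion ℝ) (h1 : f 1 = g 1) (hi : f iQ = g iQ)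
    (hj : f jQ = g jQ) (hk : f kQ = g kQ) : f = g := by
  apply LinearMap.ext
  intro x
  rw [decompQ x]
  simp only [map_add, map_smul, h1, hi, hj, hk]

lemma simkey (t : imH →ₗ[ℝ] imH) (c : ℝ) (hsim : ∀ x : imH, ‖t x‖ = c * ‖x‖)
    (a b : imH) :
    (inner ℝ ((t a : imH) : Quaternion ℝ) ((t b : imH) : Quaternion ℝ) : ℝ) =
      c^2 * (inner ℝ (a : Quaternion ℝ) (b : Quaternion ℝ) : ℝ) := by
  have e1 := norm_add_sq_real ((t a : imH) : Quaternion ℝ) ((t b : imH) : Quaternion ℝ)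
  have e2 := norm_add_sq_real ((a : imH) : Quaternion ℝ) ((b : imH) : Quaternion ℝ)
  have h3 : ‖((t a : imH) : Quaternion ℝ) + ((t b : imH) : Quaternion ℝ)‖ =
      c * ‖((a : imH) : Quaternion ℝ) + ((b : imH) : Quaternion ℝ)‖ := by
    rw [← Submodule.coe_add, ← Submodule.coe_add, ← map_add, ← Submodule.coe_norm,
      ← Submodule.coe_norm, hsim]
  have h4 : ‖((t a : imH) : Quaternion ℝ)‖ = c * ‖(a : Quaternion ℝ)‖ := by
    rw [← Submodule.coe_norm, ← Submodule.coe_norm, hsim]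
  have h5 : ‖((t b : imH) : Quaternion ℝ)‖ = c * ‖(b : Quaternion ℝ)‖ := by
    rw [← Submodule.coe_norm, ← Submodule.coe_norm, hsim]
  rw [h3, h4, h5] at e1
  rw [mul_pow, mul_pow, mul_pow] at e1
  nlinarith [e1, e2, sq_nonneg c]

lemma starkey (U V W : Quaternion ℝ) (hUre : U.re = 0) (hVre : V.re = 0) (hWre : W.re = 0)
    (hVU : V * U = -(U*V)) (hWV : W * V = -(V*W)) (hWU : W * U = -(U*W)) :
    star (U*V*W) = U*V*W := by
  have hsU : star U = -U := Quaternion.star_eq_neg.2 hUre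
  have hsV : star V = -V := Quaternion.star_eq_neg.2 hVre
  have hsW : star W = -W := Quaternion.star_eq_neg.2 hWre
  calc star (U*V*W) = star W * (star V * star U) := by rw [star_mul, star_mul]
    _ = -(W * (V * U)) := by rw [hsU, hsV, hsW]; simp [mul_neg, neg_mul]
    _ = W * (U * V) := by rw [hVU]; simp [mul_neg]
    _ = (W * U) * V := by rw [mul_assoc]
    _ = -((U * W) * V) := by rw [hWU]; simp [neg_mul]
    _ = -(U * (W * V)) := by rw [mul_assoc]
    _ = U * (V * W) := by rw [hWV]; simp [mul_neg]
    _ = U*V*W := by rw [mul_assoc]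

lemma zsq (U V W : Quaternion ℝ) (c : ℝ) (hUn : ‖U‖ = c) (hVn : ‖V‖ = c) (hWn : ‖W‖ = c)
    (hstar : star (U*V*W) = U*V*W) :
    (U*V*W) * (U*V*W) = ((c^2*(c^2*c^2) : ℝ) : Quaternion ℝ) := by
  have hn : normSq (U*V*W) = c^2*(c^2*c^2) := by
    rw [map_mul, map_mul, Quaternion.normSq_eq_norm_mul_self, Quaternion.normSq_eq_norm_mul_self,
      Quaternion.normSq_eq_norm_mul_self, hUn, hVn, hWn]
    ring
  calc (U*V*W) * (U*V*W) = (U*V*W) * star (U*V*W) := by rw [hstar]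
    _ = ((normSq (U*V*W) : ℝ) : Quaternion ℝ) := Quaternion.self_mul_star _
    _ = _ := by rw [hn]

lemma zcases (Z : Quaternion ℝ) (c : ℝ) (hc : 0 < c)
    (hZZ : Z * Z = ((c^2*(c^2*c^2) : ℝ) : Quaternion ℝ)) :
    ∃ s : ℝ, |s| = c ∧ Z = ((-(s*c^2) : ℝ) : Quaternion ℝ) := by
  have hfac : (Z - ((c^3 : ℝ) : Quaternion ℝ)) * (Z + ((c^3 : ℝ) : Quaternion ℝ)) = 0 := by
    have hcomm : ((c^3 : ℝ) : Quaternion ℝ) * Z = Z * ((c^3 : ℝ) : Quaternion ℝ) :=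
      Quaternion.coe_commutes _ _
    calc (Z - ((c^3 : ℝ) : Quaternion ℝ)) * (Z + ((c^3 : ℝ) : Quaternion ℝ))
        = Z*Z + Z*((c^3 : ℝ) : Quaternion ℝ)
          - (((c^3 : ℝ) : Quaternion ℝ)*Z + ((c^3 : ℝ) : Quaternion ℝ)*((c^3 : ℝ) : Quaternion ℝ)) := by
          rw [sub_mul, mul_add, mul_add]
      _ = Z*Z - ((c^3 : ℝ) : Quaternion ℝ)*((c^3 : ℝ) : Quaternion ℝ) := by rw [hcomm]; abel
      _ = 0 := by
          rw [hZZ, ← Quaternion.coe_mul, ← Quaternion.coe_sub,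
            show (c^2*(c^2*c^2) - c^3*c^3 : ℝ) = 0 from by ring, Quaternion.coe_zero]
  rcases mul_eq_zero.1 hfac with h | h
  · refine ⟨-c, by rw [abs_neg, abs_of_pos hc], ?_⟩
    rw [sub_eq_zero.1 h]
    rw [show (-(-c*c^2) : ℝ) = c^3 from by ring]
  · refine ⟨c, abs_of_pos hc, ?_⟩
    rw [eq_neg_of_add_eq_zero_left h, ← Quaternion.coe_neg,
      show (-(c^3) : ℝ) = -(c*c^2) from by ring]

lemma prodkey (U V W : Quaternion ℝ) (c s : ℝ) (hc : c ≠ 0) (hs0 : s ≠ 0) (hs2 : s^2 = c^2)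
    (hUU : U * U = ((-(c^2) : ℝ) : Quaternion ℝ))
    (hVV : V * V = ((-(c^2) : ℝ) : Quaternion ℝ))
    (hWW : W * W = ((-(c^2) : ℝ) : Quaternion ℝ))
    (hVU : V * U = -(U*V)) (hWV : W * V = -(V*W)) (hWU : W * U = -(U*W))
    (hZs : U*V*W = ((-(s*c^2) : ℝ) : Quaternion ℝ)) :
    U * V = ((s:ℝ) : Quaternion ℝ) * W ∧ V * W = ((s:ℝ) : Quaternion ℝ) * U ∧
      W * U = ((s:ℝ) : Quaternion ℝ) * V := by
  have hcr : (-(c^2) : ℝ) ≠ 0 := neg_ne_zero.2 (pow_ne_zero 2 hc)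
  have hcne : ((-(c^2) : ℝ) : Quaternion ℝ) ≠ 0 := fun h =>
    hcr (by rwa [← Quaternion.coe_zero, Quaternion.coe_inj] at h)
  have hsne : ((s : ℝ) : Quaternion ℝ) ≠ 0 := fun h =>
    hs0 (by rwa [← Quaternion.coe_zero, Quaternion.coe_inj] at h)
  have hss : (s * s : ℝ) = c^2 := by rw [← pow_two]; exact hs2
  have hUV2 : U * V = ((s:ℝ) : Quaternion ℝ) * W := by
    apply mul_left_cancel₀ hcne
    calc ((-(c^2):ℝ) : Quaternion ℝ) * (U*V) = (U*V) * ((-(c^2):ℝ) : Quaternion ℝ) :=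
          (Quaternion.coe_commutes _ _)
      _ = (U*V) * (W*W) := by rw [hWW]
      _ = ((U*V)*W) * W := (mul_assoc _ W W).symm
      _ = ((-(s*c^2) : ℝ) : Quaternion ℝ) * W := by rw [hZs]
      _ = (((-(c^2)) * s : ℝ) : Quaternion ℝ) * W := by
          rw [show ((-(c^2)) * s : ℝ) = -(s*c^2) from by ring]
      _ = ((-(c^2):ℝ) : Quaternion ℝ) * (((s:ℝ) : Quaternion ℝ) * W) := by
          rw [Quaternion.coe_mul, mul_assoc]
  refine ⟨hUV2, ?_, ?_⟩
  · have h1 : ((-(c^2):ℝ) : Quaternion ℝ) * U = ((s:ℝ) : Quaternion ℝ) * -(V*W) := by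
      calc ((-(c^2):ℝ) : Quaternion ℝ) * U = U * ((-(c^2):ℝ) : Quaternion ℝ) :=
            Quaternion.coe_commutes _ _
        _ = U * (V*V) := by rw [hVV]
        _ = (U*V)*V := (mul_assoc U V V).symm
        _ = ((s:ℝ) : Quaternion ℝ) * (W*V) := by rw [hUV2, mul_assoc]
        _ = ((s:ℝ) : Quaternion ℝ) * -(V*W) := by rw [hWV]
    have h2 : ((s:ℝ) : Quaternion ℝ) * (V*W) = ((s:ℝ) : Quaternion ℝ) * (((s:ℝ) : Quaternion ℝ) * U) := by
      calc ((s:ℝ) : Quaternion ℝ) * (V*W) = -(((s:ℝ) : Quaternion ℝ) * -(V*W)) := by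
            rw [mul_neg, neg_neg]
        _ = -(((-(c^2):ℝ) : Quaternion ℝ) * U) := by rw [← h1]
        _ = ((c^2 : ℝ) : Quaternion ℝ) * U := by
            rw [← neg_mul, ← Quaternion.coe_neg, neg_neg]
        _ = ((s * s : ℝ) : Quaternion ℝ) * U := by rw [hss]
        _ = ((s:ℝ) : Quaternion ℝ) * (((s:ℝ) : Quaternion ℝ) * U) := by
            rw [Quaternion.coe_mul, mul_assoc]
    exact mul_left_cancel₀ hsne h2
  · have h1 : ((-(c^2):ℝ) : Quaternion ℝ) * V = ((s:ℝ) : Quaternion ℝ) * (U*W) := by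
      calc ((-(c^2):ℝ) : Quaternion ℝ) * V = (U*U)*V := by rw [hUU]
        _ = U*(U*V) := mul_assoc U U V
        _ = U*(((s:ℝ) : Quaternion ℝ)*W) := by rw [hUV2]
        _ = (U*((s:ℝ) : Quaternion ℝ))*W := (mul_assoc _ _ _).symm
        _ = (((s:ℝ) : Quaternion ℝ)*U)*W := by rw [← Quaternion.coe_commutes]
        _ = ((s:ℝ) : Quaternion ℝ)*(U*W) := mul_assoc _ _ _
    have h2 : ((s:ℝ) : Quaternion ℝ) * (U*W) = ((s:ℝ) : Quaternion ℝ) * (-(((s:ℝ) : Quaternion ℝ) * V)) := by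
      calc ((s:ℝ) : Quaternion ℝ) * (U*W) = ((-(c^2):ℝ) : Quaternion ℝ) * V := h1.symm
        _ = ((-(s*s):ℝ) : Quaternion ℝ) * V := by rw [hss]
        _ = -(((s*s :ℝ) : Quaternion ℝ) * V) := by rw [Quaternion.coe_neg, neg_mul]
        _ = -(((s:ℝ) : Quaternion ℝ) * (((s:ℝ) : Quaternion ℝ) * V)) := by
            rw [Quaternion.coe_mul, mul_assoc]
        _ = ((s:ℝ) : Quaternion ℝ) * (-(((s:ℝ) : Quaternion ℝ) * V)) := by rw [mul_neg]
    have h3 := mul_left_cancel₀ hsne h2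
    rw [hWU, h3, neg_neg]

lemma ttdef (t : imH →ₗ[ℝ] imH) (s : ℝ) :
    ∃ tt : Quaternion ℝ →ₗ[ℝ] Quaternion ℝ,
      ∀ x, tt x = ((t (imProj x) : imH) : Quaternion ℝ) + ((s * x.re : ℝ) : Quaternion ℝ) := by
  refine ⟨{ toFun := fun x => ((t (imProj x) : imH) : Quaternion ℝ) + ((s * x.re : ℝ) : Quaternion ℝ),
            map_add' := ?_, map_smul' := ?_ }, fun _ => rfl⟩
  · intro x y
    show ((t (imProj (x + y)) : imH) : Quaternion ℝ) + ((s * (x + y).re : ℝ) : Quaternion ℝ) = (((t (imProj x) : imH) : Quaternion ℝ) + ((s * (x).re : ℝ) : Quaternion ℝ)) + (((t (imProj y) : imH) : Quaternion ℝ) + ((s * (y).re : ℝ) : Quaternion ℝ))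
    rw [map_add]
    push_cast [Quaternion.re_add]
    ext <;> simp <;> ring
  · intro r x
    show ((t (imProj (r • x)) : imH) : Quaternion ℝ) + ((s * (r • x).re : ℝ) : Quaternion ℝ) = (RingHom.id ℝ) r • (((t (imProj x) : imH) : Quaternion ℝ) + ((s * (x).re : ℝ) : Quaternion ℝ))
    rw [map_smul, RingHom.id_apply, smul_add]
    congr 1
    · rw [map_smul, Submodule.coe_smul]
    · rw [Quaternion.re_smul, smul_eq_mul, ← Quaternion.coe_mul_eq_smul, ← Quaternion.coe_mul]
      ring_nf

set_option maxHeartbeats 1000000 in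
/-- The group of f-quaternionic linear automorphisms of `Im ℍ` (with its standard f-quaternionic
structure `ℍ = Im ℍ ⊕ ℝ`) is `CO(3)`: a bijective real-linear map `t : Im ℍ → Im ℍ` admits a
quaternionic linear lift `t̃ : ℍ → ℍ` preserving `ℝ` and restricting to `t` on `Im ℍ` if and only
if `t` is a similarity, i.e. `‖t x‖ = c ‖x‖` for some constant `c > 0`. -/
theorem fq_automorphisms_of_imH_eq_CO3
    (t : imH →ₗ[ℝ] imH) (hbij : Function.Bijective t) :
    (∃ tt : Quaternion ℝ →ₗ[ℝ] Quaternion ℝ, Function.Bijective tt ∧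
      (∃ T : Quaternion ℝ → Quaternion ℝ,
        ∀ q : Quaternion ℝ, q.re = 0 → ‖q‖ = 1 →
          ((T q).re = 0 ∧ ‖T q‖ = 1 ∧ ∀ x : Quaternion ℝ, tt (q * x) = T q * tt x)) ∧
      (∀ r : ℝ, ∃ s : ℝ, tt (r : Quaternion ℝ) = (s : Quaternion ℝ)) ∧
      (∀ x : imH, tt (x : Quaternion ℝ) = (t x : Quaternion ℝ)))
    ↔ (∃ c : ℝ, 0 < c ∧ ∀ x : imH, ‖t x‖ = c * ‖x‖) := by
  constructor
  · rintro ⟨tt, hinj, ⟨T, hT⟩, hR, hcompat⟩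
    obtain ⟨s, hs⟩ := hR 1
    have hs0 : s ≠ 0 := by
      intro h
      subst h
      have h1 : tt ((1:ℝ) : Quaternion ℝ) = tt 0 := by
        rw [hs, map_zero]; norm_num
      have := hinj.1 h1
      norm_num at this
    refine ⟨|s|, abs_pos.2 hs0, ?_⟩
    intro x
    by_cases hx : x = 0
    · simp [hx]
    · have hxn : ‖x‖ ≠ 0 := norm_ne_zero_iff.2 hx
      set q : Quaternion ℝ := ‖x‖⁻¹ • (x : Quaternion ℝ) with hq
      have hqre : q.re = 0 := by
        simp [hq, Quaternion.re_smul, im_re0 x]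
      have hxcoe : ‖(x : Quaternion ℝ)‖ = ‖x‖ := (Submodule.coe_norm x).symm
      have hqn : ‖q‖ = 1 := by
        rw [hq, norm_smul, hxcoe, norm_inv, Real.norm_eq_abs,
          abs_of_nonneg (norm_nonneg x), inv_mul_cancel₀ hxn]
      obtain ⟨-, hTn, hmul⟩ := hT q hqre hqn
      have hs' : tt 1 = (s : Quaternion ℝ) := by rw [← hs]; norm_num
      have h1 := hmul 1
      rw [mul_one, hs'] at h1
      have h2 : tt q = ‖x‖⁻¹ • ((t x : imH) : Quaternion ℝ) := by
        rw [hq, map_smul, hcompat]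
      have h3 : ((t x : imH) : Quaternion ℝ) = ‖x‖ • tt q := by
        rw [h2, smul_smul, mul_inv_cancel₀ hxn, one_smul]
      calc ‖t x‖ = ‖((t x : imH) : Quaternion ℝ)‖ := Submodule.coe_norm _
        _ = ‖(‖x‖) • tt q‖ := by rw [← h3]
        _ = ‖x‖ * ‖tt q‖ := by
            rw [norm_smul, Real.norm_eq_abs, abs_of_nonneg (norm_nonneg x)]
        _ = ‖x‖ * (‖T q‖ * ‖((s:ℝ) : Quaternion ℝ)‖) := by rw [h1, norm_mul]
        _ = |s| * ‖x‖ := by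
            rw [hTn, Quaternion.norm_coe, Real.norm_eq_abs]
            ring
  · rintro ⟨c, hc, hsim⟩
    set U : Quaternion ℝ := ((t iH : imH) : Quaternion ℝ) with hUdef
    set V : Quaternion ℝ := ((t jH : imH) : Quaternion ℝ) with hVdef
    set W : Quaternion ℝ := ((t kH : imH) : Quaternion ℝ) with hWdef
    have hUre : U.re = 0 := im_re0 _
    have hVre : V.re = 0 := im_re0 _
    have hWre : W.re = 0 := im_re0 _
    have hni : ‖iH‖ = 1 := by rw [Submodule.coe_norm]; exact norm_iQ
    have hnj : ‖jH‖ = 1 := by rw [Submodule.coe_norm]; exact norm_jQ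
    have hnk : ‖kH‖ = 1 := by rw [Submodule.coe_norm]; exact norm_kQ
    have hUn : ‖U‖ = c := by rw [hUdef, ← Submodule.coe_norm, hsim, hni, mul_one]
    have hVn : ‖V‖ = c := by rw [hVdef, ← Submodule.coe_norm, hsim, hnj, mul_one]
    have hWn : ‖W‖ = c := by rw [hWdef, ← Submodule.coe_norm, hsim, hnk, mul_one]
    -- orthogonality
    have horth : ∀ a b : imH, (inner ℝ (a : Quaternion ℝ) (b : Quaternion ℝ) : ℝ) = 0 →
        (((t a : imH) : Quaternion ℝ) * ((t b : imH) : Quaternion ℝ)).re = 0 := by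
      intro a b hab
      have h := simkey t c hsim a b
      rw [hab, mul_zero] at h
      have hd := Quaternion.inner_def ((t a : imH) : Quaternion ℝ) ((t b : imH) : Quaternion ℝ)
      rw [Quaternion.star_eq_neg.2 (im_re0 (t b)), mul_neg, Quaternion.re_neg] at hd
      linarith [h, hd]
    have hreUV : (U * V).re = 0 := horth iH jH inner_iQ_jQ
    have hreVW : (V * W).re = 0 := horth jH kH inner_jQ_kQ
    have hreUW : (U * W).re = 0 := horth iH kH inner_iQ_kQ
    have hVU : V * U = -(U*V) := anticomm U V hUre hVre hreUV
    have hWV : W * V = -(V*W) := anticomm V W hVre hWre hreVW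
    have hWU : W * U = -(U*W) := anticomm U W hUre hWre hreUW
    have hUU : U * U = ((-(c^2) : ℝ) : Quaternion ℝ) := by rw [sq_im U hUre, hUn]
    have hVV : V * V = ((-(c^2) : ℝ) : Quaternion ℝ) := by rw [sq_im V hVre, hVn]
    have hWW : W * W = ((-(c^2) : ℝ) : Quaternion ℝ) := by rw [sq_im W hWre, hWn]
    have hstar := starkey U V W hUre hVre hWre hVU hWV hWU
    have hZZ := zsq U V W c hUn hVn hWn hstar
    obtain ⟨s, hsabs, hZs⟩ := zcases (U*V*W) c hc hZZ
    have hs0 : s ≠ 0 := by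
      intro h
      rw [h, abs_zero] at hsabs
      exact (ne_of_gt hc) hsabs.symm
    have hs2 : s^2 = c^2 := by rw [← sq_abs, hsabs]
    obtain ⟨hUV2, hVW2, hWU2⟩ :=
      prodkey U V W c s (ne_of_gt hc) hs0 hs2 hUU hVV hWW hVU hWV hWU hZs
    have hVU2 : V * U = -(((s:ℝ) : Quaternion ℝ) * W) := by rw [hVU, hUV2]
    have hUW2 : U * W = -(((s:ℝ) : Quaternion ℝ) * V) := by rw [← hWU2, hWU, neg_neg]
    have hWV2 : W * V = -(((s:ℝ) : Quaternion ℝ) * U) := by rw [← hVW2]; exact hWV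
    obtain ⟨tt, htt⟩ := ttdef t s
    -- evaluations
    have httIm : ∀ a : imH, tt ↑a = ((t a : imH) : Quaternion ℝ) := by
      intro a
      rw [htt]
      have h1 : imProj ↑a = a := Subtype.ext (by rw [imProj_coe, im_re0 a]; simp)
      rw [h1, im_re0 a, mul_zero, Quaternion.coe_zero, add_zero]
    have htt1 : tt 1 = ((s:ℝ) : Quaternion ℝ) := by
      rw [htt]
      have h1 : imProj (1 : Quaternion ℝ) = 0 := by
        apply Subtype.ext
        rw [imProj_coe, Quaternion.re_one]
        simp
      rw [h1, map_zero, Quaternion.re_one, mul_one]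
      simp
    have httI : tt iQ = U := httIm iH
    have httJ : tt jQ = V := httIm jH
    have httK : tt kQ = W := httIm kH
    have httneg1 : tt (-1) = -((s:ℝ) : Quaternion ℝ) := by rw [map_neg, htt1]
    -- the three base identities
    have hsinv : s⁻¹ * s = 1 := inv_mul_cancel₀ hs0
    have hsc : s⁻¹ * -(c^2) = -s := by
      field_simp
      linarith [hs2]
    have mI : ∀ x, tt (iQ * x) = s⁻¹ • (U * tt x) := by
      intro x
      have heq : tt ∘ₗ LinearMap.mulLeft ℝ iQ
          = s⁻¹ • ((LinearMap.mulLeft ℝ U) ∘ₗ tt) := by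
        apply linext <;>
          simp only [LinearMap.comp_apply, LinearMap.mulLeft_apply, LinearMap.smul_apply]
        · rw [mul_one, htt1, httI, Quaternion.mul_coe_eq_smul, smul_smul, hsinv, one_smul]
        · rw [iQ_mul_iQ, httneg1, httI, hUU, Quaternion.smul_coe, hsc, Quaternion.coe_neg]
        · rw [iQ_mul_jQ, httK, httJ, hUV2, Quaternion.coe_mul_eq_smul, smul_smul, hsinv, one_smul]
        · rw [iQ_mul_kQ, map_neg, httJ, httK, hUW2, Quaternion.coe_mul_eq_smul, smul_neg,
            smul_smul, hsinv, one_smul]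
      have h2 : (tt ∘ₗ LinearMap.mulLeft ℝ iQ) x
          = (s⁻¹ • ((LinearMap.mulLeft ℝ U) ∘ₗ tt)) x := by rw [heq]
      simp only [LinearMap.comp_apply, LinearMap.mulLeft_apply, LinearMap.smul_apply] at h2
      exact h2
    have mJ : ∀ x, tt (jQ * x) = s⁻¹ • (V * tt x) := by
      intro x
      have heq : tt ∘ₗ LinearMap.mulLeft ℝ jQ
          = s⁻¹ • ((LinearMap.mulLeft ℝ V) ∘ₗ tt) := by
        apply linext <;>
          simp only [LinearMap.comp_apply, LinearMap.mulLeft_apply, LinearMap.smul_apply]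
        · rw [mul_one, htt1, httJ, Quaternion.mul_coe_eq_smul, smul_smul, hsinv, one_smul]
        · rw [jQ_mul_iQ, map_neg, httK, httI, hVU2, Quaternion.coe_mul_eq_smul, smul_neg,
            smul_smul, hsinv, one_smul]
        · rw [jQ_mul_jQ, httneg1, httJ, hVV, Quaternion.smul_coe, hsc, Quaternion.coe_neg]
        · rw [jQ_mul_kQ, httI, httK, hVW2, Quaternion.coe_mul_eq_smul, smul_smul, hsinv, one_smul]
      have h2 : (tt ∘ₗ LinearMap.mulLeft ℝ jQ) x
          = (s⁻¹ • ((LinearMap.mulLeft ℝ V) ∘ₗ tt)) x := by rw [heq]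
      simp only [LinearMap.comp_apply, LinearMap.mulLeft_apply, LinearMap.smul_apply] at h2
      exact h2
    have mK : ∀ x, tt (kQ * x) = s⁻¹ • (W * tt x) := by
      intro x
      have heq : tt ∘ₗ LinearMap.mulLeft ℝ kQ
          = s⁻¹ • ((LinearMap.mulLeft ℝ W) ∘ₗ tt) := by
        apply linext <;>
          simp only [LinearMap.comp_apply, LinearMap.mulLeft_apply, LinearMap.smul_apply]
        · rw [mul_one, htt1, httK, Quaternion.mul_coe_eq_smul, smul_smul, hsinv, one_smul]
        · rw [kQ_mul_iQ, httJ, httI, hWU2, Quaternion.coe_mul_eq_smul, smul_smul, hsinv, one_smul]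
        · rw [kQ_mul_jQ, map_neg, httI, httJ, hWV2, Quaternion.coe_mul_eq_smul, smul_neg,
            smul_smul, hsinv, one_smul]
        · rw [kQ_mul_kQ, httneg1, httK, hWW, Quaternion.smul_coe, hsc, Quaternion.coe_neg]
      have h2 : (tt ∘ₗ LinearMap.mulLeft ℝ kQ) x
          = (s⁻¹ • ((LinearMap.mulLeft ℝ W) ∘ₗ tt)) x := by rw [heq]
      simp only [LinearMap.comp_apply, LinearMap.mulLeft_apply, LinearMap.smul_apply] at h2
      exact h2
    -- the main identity
    have main : ∀ a : imH, ∀ x : Quaternion ℝ,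
        tt ((a : Quaternion ℝ) * x) = s⁻¹ • (((t a : imH) : Quaternion ℝ) * tt x) := by
      intro a x
      have hdec := decompIm a
      have hdecc : (a : Quaternion ℝ)
          = (a : Quaternion ℝ).imI • iQ + (a : Quaternion ℝ).imJ • jQ
            + (a : Quaternion ℝ).imK • kQ := by
        conv_lhs => rw [hdec]
        push_cast
        rfl
      have hdect : ((t a : imH) : Quaternion ℝ)
          = (a : Quaternion ℝ).imI • U + (a : Quaternion ℝ).imJ • V
            + (a : Quaternion ℝ).imK • W := by
        conv_lhs => rw [hdec]
        rw [map_add, map_add, map_smul, map_smul, map_smul]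
        push_cast
        rfl
      rw [hdecc, hdect]
      rw [add_mul, add_mul, smul_mul_assoc, smul_mul_assoc, smul_mul_assoc, map_add, map_add,
        map_smul, map_smul, map_smul, mI, mJ, mK]
      rw [add_mul, add_mul, smul_mul_assoc, smul_mul_assoc, smul_mul_assoc, smul_add, smul_add]
      rw [smul_comm s⁻¹ ((a : Quaternion ℝ).imI), smul_comm s⁻¹ ((a : Quaternion ℝ).imJ),
        smul_comm s⁻¹ ((a : Quaternion ℝ).imK)]
    refine ⟨tt, ⟨?_, ?_⟩, ⟨fun q => s⁻¹ • ((t (imProj q) : imH) : Quaternion ℝ), ?_⟩, ?_, httIm⟩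
    · -- injective
      have hker : ∀ x, tt x = 0 → x = 0 := by
        intro x hx
        rw [htt] at hx
        have hre := congrArg QuaternionAlgebra.re hx
        simp only [Quaternion.re_add, im_re0, Quaternion.re_coe, Quaternion.re_zero,
          zero_add] at hre
        have hxre : x.re = 0 := by
          rcases mul_eq_zero.1 hre with h | h
          · exact absurd h hs0
          · exact h
        rw [hxre, mul_zero, Quaternion.coe_zero, add_zero] at hx
        have h2 : t (imProj x) = 0 := by
          apply Subtype.ext
          rw [hx]
          rfl
        have h3 : imProj x = 0 := hbij.1 (by rw [h2, map_zero])
        have h4 : (imProj x : Quaternion ℝ) = 0 := by rw [h3]; rfl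
        rw [imProj_coe, hxre] at h4
        simpa using h4
      intro x y hxy
      have := hker (x - y) (by rw [map_sub, hxy, sub_self])
      exact sub_eq_zero.1 this
    · -- surjective
      intro y
      obtain ⟨z, hz⟩ := hbij.2 (imProj y)
      refine ⟨(z : Quaternion ℝ) + ((y.re / s : ℝ) : Quaternion ℝ), ?_⟩
      rw [map_add, httIm z, hz, htt]
      have h1 : imProj ((y.re/s : ℝ) : Quaternion ℝ) = 0 := by
        apply Subtype.ext
        rw [imProj_coe, Quaternion.re_coe]
        simp
      rw [h1, map_zero, Quaternion.re_coe]
      rw [imProj_coe]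
      have h2 : s * (y.re / s) = y.re := by field_simp
      rw [h2]
      simp only [ZeroMemClass.coe_zero, zero_add]
      abel
    · -- the T property
      intro q hqre hqn
      have hmem : q ∈ imH := mem_imH.2 hqre
      have hproj : imProj q = ⟨q, hmem⟩ := Subtype.ext (by rw [imProj_coe, hqre]; simp)
      refine ⟨?_, ?_, ?_⟩
      · simp [Quaternion.re_smul, im_re0]
      · rw [norm_smul, ← Submodule.coe_norm, hsim, hproj]
        have : ‖(⟨q, hmem⟩ : imH)‖ = 1 := by rw [Submodule.coe_norm]; exact hqn
        rw [this, mul_one, norm_inv, Real.norm_eq_abs, hsabs, inv_mul_cancel₀ (ne_of_gt hc)]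
      · intro x
        show tt (q * x) = (s⁻¹ • ((t (imProj q) : imH) : Quaternion ℝ)) * tt x
        have h := main ⟨q, hmem⟩ x
        rw [hproj, smul_mul_assoc]
        exact h
    · -- reals to reals
      intro r
      refine ⟨s * r, ?_⟩
      rw [htt]
      have h1 : imProj ((r : ℝ) : Quaternion ℝ) = 0 := by
        apply Subtype.ext
        rw [imProj_coe, Quaternion.re_coe]
        simp
      rw [h1, map_zero, Quaternion.re_coe]
      simp
end

section
/- Let U be a real vector space, U^ℍ = ℍ ⊗_ℝ U, and Λ the set of conjugations τ_q (q ∈ S²) on U^ℍ. Suppose C ⊆ U^ℍ is an ℍ-submodule satisfying (1) C ∩ ⋂_{τ∈Λ} τ(C) = 0 and (2) C + σ(C) = U^ℍ for every σ ∈ Λ. Then, setting E = U^ℍ/C and letting ι : U → E be the composition of u ↦ 1 ⊗ u with the quotient projection, the pair (E, ι) is a linear CR quaternionic structure on U: ι is injective and im ι + J(im ι) = E for every admissible linear complex structure J on E. -/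
open TensorProduct

/-- The real-linear map `p ↦ -q p q` on `ℍ`. -/
noncomputable def quatConjMap (q : Quaternion ℝ) : Quaternion ℝ →ₗ[ℝ] Quaternion ℝ :=
  LinearMap.mulLeft ℝ (-q) ∘ₗ LinearMap.mulRight ℝ q

/-- The conjugation `τ_q : q' ⊗ u ↦ -q q' q ⊗ u` on the quaternionification `U^ℍ = ℍ ⊗_ℝ U`. -/
noncomputable def tauQ (U : Type*) [AddCommGroup U] [Module ℝ U] (q : Quaternion ℝ) :
    (Quaternion ℝ) ⊗[ℝ] U →ₗ[ℝ] (Quaternion ℝ) ⊗[ℝ] U :=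
  TensorProduct.map (quatConjMap q) LinearMap.id

variable {U : Type*} [AddCommGroup U] [Module ℝ U]

/-- The intersection `⋂_{τ ∈ Λ} τ(S)` over all conjugations `τ_q`, `q ∈ S²`. -/
noncomputable def interConj (S : Submodule ℝ ((Quaternion ℝ) ⊗[ℝ] U)) :
    Submodule ℝ ((Quaternion ℝ) ⊗[ℝ] U) :=
  ⨅ q ∈ {q : Quaternion ℝ | q.re = 0 ∧ ‖q‖ = 1}, Submodule.map (tauQ U q) S

/-- For an `ℍ`-submodule `C ⊆ U^ℍ`, the natural map `ι : U → U^ℍ/C`,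
`u ↦ (1 ⊗ u) mod C`. -/
noncomputable def iotaQuot (C : Submodule (Quaternion ℝ) ((Quaternion ℝ) ⊗[ℝ] U)) :
    U →ₗ[ℝ] ((Quaternion ℝ) ⊗[ℝ] U) ⧸ C :=
  (C.mkQ.restrictScalars ℝ) ∘ₗ (TensorProduct.mk ℝ (Quaternion ℝ) U 1)

/-! ### Auxiliary lemmas -/

lemma aux_qsq (q : Quaternion ℝ) (h0 : q.re = 0) (h1 : ‖q‖ = 1) : q * q = -1 := by
  have hs : star q = -q := by ext <;> simp [h0]
  have h2 := Quaternion.self_mul_star q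
  rw [hs, Quaternion.normSq_eq_norm_mul_self, h1] at h2
  simp only [mul_neg, one_mul, Quaternion.coe_one] at h2
  rw [← neg_neg (q*q), h2]

lemma aux_qcomm (q s : Quaternion ℝ) (h0 : q.re = 0) (h1 : ‖q‖ = 1) (h : s * q = q * s) :
    s = (s.re : Quaternion ℝ) + (-((s * q).re)) • q := by
  have hn : q.imI^2 + q.imJ^2 + q.imK^2 = 1 := by
    have h3 := Quaternion.normSq_eq_norm_mul_self q
    rw [h1, Quaternion.normSq_def'] at h3
    nlinarith [h3, h0]
  have e1 := congrArg QuaternionAlgebra.imI h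
  have e2 := congrArg QuaternionAlgebra.imJ h
  have e3 := congrArg QuaternionAlgebra.imK h
  simp only [Quaternion.imI_mul, Quaternion.imJ_mul, Quaternion.imK_mul, h0, mul_zero, zero_mul,
    add_zero, zero_add, zero_sub, sub_zero, neg_add_rev] at e1 e2 e3
  have c1 : s.imJ * q.imK - s.imK * q.imJ = 0 := by linarith
  have c2 : s.imK * q.imI - s.imI * q.imK = 0 := by linarith
  have c3 : s.imI * q.imJ - s.imJ * q.imI = 0 := by linarith
  ext
  · simp [h0]
  · simp only [Quaternion.imI_add, Quaternion.imI_coe, Quaternion.imI_smul, Quaternion.re_mul, h0,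
      smul_eq_mul, zero_add, mul_zero, zero_mul]
    linear_combination (-s.imI) * hn + q.imJ * c3 - q.imK * c2
  · simp only [Quaternion.imJ_add, Quaternion.imJ_coe, Quaternion.imJ_smul, Quaternion.re_mul, h0,
      smul_eq_mul, zero_add, mul_zero, zero_mul]
    linear_combination (-s.imJ) * hn - q.imI * c3 + q.imK * c1
  · simp only [Quaternion.imK_add, Quaternion.imK_coe, Quaternion.imK_smul, Quaternion.re_mul, h0,
      smul_eq_mul, zero_add, mul_zero, zero_mul]
    linear_combination (-s.imK) * hn + q.imI * c2 - q.imJ * c1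

/-- Decomposition of `p - q p q` in the plane spanned by `1, q`. -/
lemma aux_qdecomp (q p : Quaternion ℝ) (h0 : q.re = 0) (h1 : ‖q‖ = 1) :
    ∃ a b : ℝ, p + -q * (p * q) = a • (1 : Quaternion ℝ) + b • q := by
  set s : Quaternion ℝ := p + -q * (p * q) with hs
  have hq2 := aux_qsq q h0 h1
  have hcomm : s * q = q * s := by
    have l1 : s * q = p * q + q * p := by
      rw [hs, add_mul, neg_mul, neg_mul, mul_assoc q (p*q) q, mul_assoc p q q, hq2, mul_neg_one,
        mul_neg, neg_neg]
    have l2 : q * s = q * p + p * q := by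
      rw [hs, mul_add, neg_mul, mul_neg, ← mul_assoc q q (p*q), hq2, neg_one_mul, neg_neg]
    rw [l1, l2, add_comm]
  have key := aux_qcomm q s h0 h1 hcomm
  refine ⟨s.re, -((s * q).re), key.trans ?_⟩
  congr 1
  ext <;> simp [Quaternion.re_one, Quaternion.imI_one, Quaternion.imJ_one, Quaternion.imK_one]

/-- The real-part functional as an `ℝ`-linear map. -/
noncomputable def auxReL : Quaternion ℝ →ₗ[ℝ] ℝ where
  toFun p := p.re
  map_add' p p' := by simp
  map_smul' r p := by simp

/-- Real-part projection of the quaternionification. -/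
noncomputable def auxF0 {V : Type*} [AddCommGroup V] [Module ℝ V] :
    (Quaternion ℝ) ⊗[ℝ] V →ₗ[ℝ] V :=
  (TensorProduct.lid ℝ V).toLinearMap ∘ₗ TensorProduct.map auxReL LinearMap.id

lemma auxF0_tmul {V : Type*} [AddCommGroup V] [Module ℝ V] (p : Quaternion ℝ) (v : V) :
    auxF0 (p ⊗ₜ[ℝ] v) = p.re • v := by
  simp [auxF0, auxReL, TensorProduct.lid_tmul]
  rfl

lemma tauQ_tmul (q p : Quaternion ℝ) (v : U) :
    tauQ U q (p ⊗ₜ[ℝ] v) = (-q * (p * q)) ⊗ₜ[ℝ] v := by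
  simp [tauQ, quatConjMap, LinearMap.mulLeft_apply, LinearMap.mulRight_apply]

/-- `x + τ_q x` always lies in `(ℝ1 ⊕ ℝq) ⊗ U`. -/
lemma aux_tau_fix_decomp (q : Quaternion ℝ) (h0 : q.re = 0) (h1 : ‖q‖ = 1)
    (x : (Quaternion ℝ) ⊗[ℝ] U) :
    ∃ u u' : U, x + tauQ U q x = (1 : Quaternion ℝ) ⊗ₜ[ℝ] u + q ⊗ₜ[ℝ] u' := by
  induction x using TensorProduct.induction_on with
  | zero => exact ⟨0, 0, by simp⟩
  | tmul p v =>
    obtain ⟨a, b, hab⟩ := aux_qdecomp q p h0 h1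
    refine ⟨a • v, b • v, ?_⟩
    rw [tauQ_tmul, ← TensorProduct.add_tmul, hab, TensorProduct.add_tmul,
      TensorProduct.smul_tmul, TensorProduct.smul_tmul]
  | add x y hx hy =>
    obtain ⟨u1, u1', hxe⟩ := hx
    obtain ⟨u2, u2', hye⟩ := hy
    refine ⟨u1 + u2, u1' + u2', ?_⟩
    rw [map_add, TensorProduct.tmul_add, TensorProduct.tmul_add]
    calc x + y + (tauQ U q x + tauQ U q y)
        = (x + tauQ U q x) + (y + tauQ U q y) := by abel
      _ = _ := by rw [hxe, hye]; abel

set_option maxHeartbeats 1000000 in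
/-- The intrinsic description of linear CR quaternionic structures: if `C ⊆ U^ℍ` is an
`ℍ`-submodule with (1) `C ∩ ⋂_{τ∈Λ} τ(C) = 0` and (2) `C + σ(C) = U^ℍ` for every conjugation
`σ ∈ Λ`, then `E = U^ℍ/C` together with `ι : u ↦ (1 ⊗ u) mod C` is a linear CR quaternionic
structure on `U`: `ι` is injective and `im ι + J(im ι) = E` for every admissible linear complex
structure `J` on `E` (multiplication by an imaginary unit quaternion). -/
theorem intrinsic_CR_quaternionic_structure
    (C : Submodule (Quaternion ℝ) ((Quaternion ℝ) ⊗[ℝ] U))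
    (h1 : C.restrictScalars ℝ ⊓ interConj (C.restrictScalars ℝ) = ⊥)
    (h2 : ∀ q : Quaternion ℝ, q.re = 0 → ‖q‖ = 1 →
      C.restrictScalars ℝ ⊔ Submodule.map (tauQ U q) (C.restrictScalars ℝ) = ⊤) :
    Function.Injective (iotaQuot C) ∧
    ∀ q : Quaternion ℝ, q.re = 0 → ‖q‖ = 1 →
      ∀ e : ((Quaternion ℝ) ⊗[ℝ] U) ⧸ C,
        ∃ u u' : U, e = iotaQuot C u + q • iotaQuot C u' := by
  constructor
  · -- injectivity
    intro a b hab
    have h0' : iotaQuot C (a - b) = 0 := by rw [map_sub, hab, sub_self]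
    set u := a - b with hu
    have hmem : (1 : Quaternion ℝ) ⊗ₜ[ℝ] u ∈ C := by
      have : C.mkQ ((1 : Quaternion ℝ) ⊗ₜ[ℝ] u) = 0 := h0'
      rwa [Submodule.mkQ_apply, Submodule.Quotient.mk_eq_zero] at this
    have hmem2 : (1 : Quaternion ℝ) ⊗ₜ[ℝ] u ∈ interConj (C.restrictScalars ℝ) := by
      rw [interConj]
      simp only [Submodule.mem_iInf]
      intro q hq
      refine ⟨(1 : Quaternion ℝ) ⊗ₜ[ℝ] u, hmem, ?_⟩
      rw [tauQ_tmul, one_mul, neg_mul, aux_qsq q hq.1 hq.2, neg_neg]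
    have hz : (1 : Quaternion ℝ) ⊗ₜ[ℝ] u ∈ (⊥ : Submodule ℝ ((Quaternion ℝ) ⊗[ℝ] U)) := by
      rw [← h1]; exact ⟨hmem, hmem2⟩
    have hz0 : (1 : Quaternion ℝ) ⊗ₜ[ℝ] u = 0 := by simpa using hz
    have : u = 0 := by
      have h := congrArg auxF0 hz0
      simpa [auxF0_tmul, Quaternion.re_one] using h
    exact sub_eq_zero.mp this
  · -- surjectivity of im ι + J (im ι)
    intro q hre hnorm e
    obtain ⟨x, rfl⟩ := C.mkQ_surjective e
    have hx : x ∈ C.restrictScalars ℝ ⊔ Submodule.map (tauQ U q) (C.restrictScalars ℝ) := by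
      rw [h2 q hre hnorm]; trivial
    obtain ⟨c, hc, d, hd, hcd⟩ := Submodule.mem_sup.mp hx
    obtain ⟨c', hc', rfl⟩ := hd
    obtain ⟨u, u', hu⟩ := aux_tau_fix_decomp q hre hnorm c'
    refine ⟨u, u', ?_⟩
    have e1 : iotaQuot C u = C.mkQ ((1 : Quaternion ℝ) ⊗ₜ[ℝ] u) := rfl
    have e2 : q • iotaQuot C u' = C.mkQ (q ⊗ₜ[ℝ] u') := by
      have e3 : iotaQuot C u' = C.mkQ ((1 : Quaternion ℝ) ⊗ₜ[ℝ] u') := rfl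
      rw [e3, ← map_smul, TensorProduct.smul_tmul', smul_eq_mul, mul_one]
    rw [e1, e2, ← map_add, Submodule.mkQ_apply, Submodule.mkQ_apply, Submodule.Quotient.eq, ← hu]
    have hxc : x - (c' + tauQ U q c') = c - c' := by rw [← hcd]; abel
    rw [hxc]
    exact sub_mem hc hc'
end
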